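/- arXiv:math/0308113 — 6 statements merged into one kernel-verified Lean document; each statement's English description precedes it below -/
import Mathlib

section
/- Let Γ be a pure (d−1)-dimensional shifted simplicial complex on [n]. For each 1 ≤ j ≤ n−d, the set Σ_j := {σ ∈ Σ_Γ : σ = A ∪ {d−|A|+j} with A ⊆ {d−|A|+j+1, …, n}} is nonempty. -/
open Finset

open scoped Classical

/-- A simplicial complex on the vertex set `V ⊆ Fin n`, given as its finite set of faces. -/
def IsComplexOn {n : ℕ} (V : Finset (Fin n)) (Γ : Finset (Finset (Fin n))) : Prop :=
  (∀ i ∈ V, ({i} : Finset (Fin n)) ∈ Γ) ∧ (∀ σ ∈ Γ, σ ⊆ V) ∧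
    (∀ σ ∈ Γ, ∀ τ ⊆ σ, τ ∈ Γ)

/-- `σ` is a minimal non-face of `Γ`. -/
def IsMinNonFace {n : ℕ} (Γ : Finset (Finset (Fin n))) (σ : Finset (Fin n)) : Prop :=
  σ ∉ Γ ∧ ∀ i ∈ σ, σ.erase i ∈ Γ

/-- `σ` is a facet (maximal face) of `Γ`. -/
def IsFacet {n : ℕ} (Γ : Finset (Finset (Fin n))) (σ : Finset (Fin n)) : Prop :=
  σ ∈ Γ ∧ ∀ τ ∈ Γ, σ ⊆ τ → τ = σ

/-- `Γ` has (simplicial) dimension `d - 1`. -/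
def HasDim {n : ℕ} (Γ : Finset (Finset (Fin n))) (d : ℕ) : Prop :=
  (∀ σ ∈ Γ, σ.card ≤ d) ∧ (∃ σ ∈ Γ, σ.card = d)

/-- `Γ` is pure of dimension `d - 1`: every facet has exactly `d` vertices. -/
def IsPureDim {n : ℕ} (Γ : Finset (Finset (Fin n))) (d : ℕ) : Prop :=
  HasDim Γ d ∧ ∀ σ, IsFacet Γ σ → σ.card = d

/-- `Γ` is shifted (vertices of `Fin n` ordered as `0 < 1 < ⋯ < n-1`, so the
vertex `v : Fin n` plays the role of `v+1 ∈ [n]` in the classical definition):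
replacing a vertex of a face by any smaller vertex again yields a face. -/
def IsShifted {n : ℕ} (Γ : Finset (Finset (Fin n))) : Prop :=
  ∀ σ ∈ Γ, ∀ j ∈ σ, ∀ i : Fin n, i < j → insert i (σ.erase j) ∈ Γ

/-- Membership in `Σ_j = {σ ∈ Σ_Γ : σ = A ∪ {d - |A| + j}, A ⊆ {d-|A|+j+1,…,n}}`
for a shifted complex: `σ` is a minimal non-face whose minimum vertex `v`
satisfies `v + |σ| = d + j` (0-indexed translation of `min σ = d - (|σ|-1) + j`,
with `A = σ \ {min σ}` consisting of strictly larger vertices). -/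
def MemSigma {n : ℕ} (Γ : Finset (Finset (Fin n))) (d j : ℕ)
    (σ : Finset (Fin n)) : Prop :=
  IsMinNonFace Γ σ ∧ ∃ v ∈ σ, (∀ w ∈ σ, v ≤ w) ∧ (v : ℕ) + σ.card = d + j

/-- The interval `{v, v+1, …, m-1}` viewed inside `Fin n` (for `m ≤ n`). -/
def intervalFin (n m v : ℕ) (h : m ≤ n) : Finset (Fin n) :=
  (Finset.Ico v m).attachFin (fun x hx => lt_of_lt_of_le (Finset.mem_Ico.mp hx).2 h)

lemma mem_intervalFin {n m v : ℕ} (h : m ≤ n) (x : Fin n) :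
    x ∈ intervalFin n m v h ↔ v ≤ (x : ℕ) ∧ (x : ℕ) < m := by
  simp [intervalFin, Finset.mem_attachFin, Finset.mem_Ico]

lemma card_intervalFin {n m v : ℕ} (h : m ≤ n) :
    (intervalFin n m v h).card = m - v := by
  simp [intervalFin, Finset.card_attachFin, Nat.card_Ico]

/-- For a pure `(d-1)`-dimensional shifted complex `Γ` on `[n]`
and each `1 ≤ j ≤ n - d`, the set `Σ_j` of minimal non-faces is nonempty. -/
theorem shifted_sigma_nonempty {n d : ℕ} (Γ : Finset (Finset (Fin n)))
    (hc : IsComplexOn Finset.univ Γ) (hsh : IsShifted Γ) (hp : IsPureDim Γ d)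
    (j : ℕ) (hj1 : 1 ≤ j) (hj2 : j ≤ n - d) :
    ∃ σ : Finset (Fin n), MemSigma Γ d j σ := by
  have hdn : d ≤ n := by
    by_contra h
    omega
  have hmn : d + j ≤ n := by omega
  set m := d + j with hm
  have hm1 : 1 ≤ m := by omega
  -- the top singleton is a face
  have hsing : intervalFin n m (m - 1) hmn ∈ Γ := by
    have heq : intervalFin n m (m - 1) hmn = {(⟨m - 1, by omega⟩ : Fin n)} := by
      ext x
      simp only [mem_intervalFin, Finset.mem_singleton]
      constructor
      · rintro ⟨h1, h2⟩
        exact Fin.ext (by simp only [Fin.val_mk]; omega)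
      · rintro rfl
        simp; omega
    rw [heq]
    exact hc.1 _ (Finset.mem_univ _)
  have hex : ∃ v, intervalFin n m v hmn ∈ Γ := ⟨m - 1, hsing⟩
  set v0 := Nat.find hex with hv0def
  have hv0 : intervalFin n m v0 hmn ∈ Γ := Nat.find_spec hex
  have hv0le : v0 ≤ m - 1 := Nat.find_le hsing
  have hv0pos : 1 ≤ v0 := by
    by_contra h
    have h0 : v0 = 0 := by omega
    have hcard := hp.1.1 _ (h0 ▸ hv0)
    rw [card_intervalFin] at hcard
    omega
  set v := v0 - 1 with hvdef
  have hvv : v + 1 = v0 := by omega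
  have hvm : v < m - 1 := by omega
  have hvn : v < n := by omega
  have hnot : intervalFin n m v hmn ∉ Γ := Nat.find_min hex (by omega)
  have hnext : intervalFin n m (v + 1) hmn ∈ Γ := by rw [hvv]; exact hv0
  refine ⟨intervalFin n m v hmn, ⟨hnot, ?_⟩, ⟨v, hvn⟩, ?_, ?_, ?_⟩
  · -- each erase is a face
    intro i hi
    rw [mem_intervalFin] at hi
    by_cases hiv : (i : ℕ) = v
    · have heq : (intervalFin n m v hmn).erase i = intervalFin n m (v + 1) hmn := by
        ext x
        simp only [Finset.mem_erase, mem_intervalFin]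
        constructor
        · rintro ⟨hx1, hx2, hx3⟩
          have : (x : ℕ) ≠ v := fun h => hx1 (Fin.ext (by omega))
          omega
        · rintro ⟨hx1, hx2⟩
          refine ⟨fun h => ?_, by omega, hx2⟩
          subst h
          omega
      rw [heq]
      exact hnext
    · have hvi : v < (i : ℕ) := by omega
      have hi1 : i ∈ intervalFin n m (v + 1) hmn := by
        rw [mem_intervalFin]; omega
      have hins := hsh _ hnext i hi1 ⟨v, hvn⟩ (by simpa [Fin.lt_def] using hvi)
      have heq : (intervalFin n m v hmn).erase i =
          insert (⟨v, hvn⟩ : Fin n) ((intervalFin n m (v + 1) hmn).erase i) := by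
        ext x
        simp only [Finset.mem_erase, mem_intervalFin, Finset.mem_insert]
        constructor
        · rintro ⟨hx1, hx2, hx3⟩
          by_cases hxv : (x : ℕ) = v
          · exact Or.inl (Fin.ext (by simp [hxv]))
          · exact Or.inr ⟨hx1, by omega, hx3⟩
        · rintro (rfl | ⟨hx1, hx2, hx3⟩)
          · refine ⟨fun h => ?_, le_refl _, by simpa using hvm.trans (by omega)⟩
            rw [← h] at hvi
            simp at hvi
          · exact ⟨hx1, by omega, hx3⟩
      rw [heq]
      exact hins
  · rw [mem_intervalFin]; simp; omega
  · intro w hw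
    rw [mem_intervalFin] at hw
    simp [Fin.le_def]
    omega
  · rw [card_intervalFin]
    simp
    omega
end

section
/- Let Γ be a pure (d−1)-dimensional shifted complex on [n], with minimal non-face sets Σ_j as defined. The sets Σ_1, …, Σ_{n−d} are pairwise disjoint and their union is the set Σ_Γ of all minimal non-faces of Γ. -/
open Finset

open scoped Classical

/-- For a pure `(d-1)`-dimensional shifted complex `Γ` on `[n]`,
the sets `Σ_1, …, Σ_{n-d}` are pairwise disjoint and their union is the set
`Σ_Γ` of all minimal non-faces of `Γ`. -/
theorem shifted_sigma_partition {n d : ℕ} (Γ : Finset (Finset (Fin n)))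
    (hc : IsComplexOn Finset.univ Γ) (hsh : IsShifted Γ) (hp : IsPureDim Γ d) :
    (∀ j₁ j₂, 1 ≤ j₁ → j₁ ≤ n - d → 1 ≤ j₂ → j₂ ≤ n - d → j₁ ≠ j₂ →
      ∀ σ : Finset (Fin n), ¬ (MemSigma Γ d j₁ σ ∧ MemSigma Γ d j₂ σ)) ∧
    (∀ σ : Finset (Fin n), IsMinNonFace Γ σ ↔
      ∃ j, 1 ≤ j ∧ j ≤ n - d ∧ MemSigma Γ d j σ) := by
  obtain ⟨hsing, hsub, hdown⟩ := hc
  obtain ⟨⟨hdle, ⟨σ₀, hσ₀, hσ₀c⟩⟩, hfacet⟩ := hp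
  constructor
  · rintro j₁ j₂ h1 h2 h3 h4 hne σ ⟨⟨_, v₁, hv₁, hmin₁, he₁⟩, ⟨_, v₂, hv₂, hmin₂, he₂⟩⟩
    have : v₁ = v₂ := le_antisymm (hmin₁ v₂ hv₂) (hmin₂ v₁ hv₁)
    subst this
    omega
  · intro σ
    constructor
    · intro hmnf
      have hσne : σ.Nonempty := by
        rcases Finset.eq_empty_or_nonempty σ with rfl | h
        · exact absurd (hdown σ₀ hσ₀ ∅ (Finset.empty_subset _)) hmnf.1
        · exact h
      set v := σ.min' hσne with hvdef
      have hv : v ∈ σ := σ.min'_mem hσne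
      have hmin : ∀ w ∈ σ, v ≤ w := fun w hw => σ.min'_le w hw
      have hub : (v : ℕ) + σ.card ≤ n := by
        have himg : σ.image Fin.val ⊆ Finset.Ico (v : ℕ) n := by
          intro x hx
          simp only [Finset.mem_image] at hx
          obtain ⟨w, hw, rfl⟩ := hx
          exact Finset.mem_Ico.2 ⟨hmin w hw, w.isLt⟩
        have hcard : σ.card ≤ n - (v : ℕ) := by
          have := Finset.card_le_card himg
          rwa [Finset.card_image_of_injective _ Fin.val_injective,
            Nat.card_Ico] at this
        have := v.isLt
        omega
      have hlb : d + 1 ≤ (v : ℕ) + σ.card := by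
        by_contra hcon
        push_neg at hcon
        have hcard : (v : ℕ) + σ.card ≤ d := by omega
        have hτ : σ.erase v ∈ Γ := hmnf.2 v hv
        set S := Γ.filter (fun ρ => σ.erase v ⊆ ρ) with hS
        have hSne : S.Nonempty := ⟨σ.erase v, Finset.mem_filter.2 ⟨hτ, Finset.Subset.refl _⟩⟩
        obtain ⟨F, hFS, hFmax⟩ := S.exists_max_image Finset.card hSne
        have hFΓ : F ∈ Γ := (Finset.mem_filter.1 hFS).1
        have hτF : σ.erase v ⊆ F := (Finset.mem_filter.1 hFS).2
        have hFfacet : IsFacet Γ F := by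
          refine ⟨hFΓ, fun ρ hρ hFρ => ?_⟩
          have hρS : ρ ∈ S := Finset.mem_filter.2 ⟨hρ, hτF.trans hFρ⟩
          exact (Finset.eq_of_subset_of_card_le hFρ (hFmax ρ hρS)).symm
        have hFd : F.card = d := hfacet F hFfacet
        have hσΓ : σ ∈ Γ := by
          by_cases hvF : v ∈ F
          · refine hdown F hFΓ σ ?_
            intro x hx
            rcases eq_or_ne x v with rfl | hxv
            · exact hvF
            · exact hτF (Finset.mem_erase.2 ⟨hxv, hx⟩)
          · set Fbig := F.filter (fun x => v < x) with hFbig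
            have hτbig : σ.erase v ⊆ Fbig := by
              intro x hx
              have hxσ := Finset.mem_erase.1 hx
              refine Finset.mem_filter.2 ⟨hτF hx, ?_⟩
              exact lt_of_le_of_ne (hmin x hxσ.2) (Ne.symm hxσ.1)
            have hsmall : (F.filter (fun x => ¬ v < x)).card ≤ (v : ℕ) := by
              have hsub2 : (F.filter (fun x => ¬ v < x)).image Fin.val ⊆ Finset.range (v : ℕ) := by
                intro x hx
                simp only [Finset.mem_image, Finset.mem_filter] at hx
                obtain ⟨w, ⟨hwF, hwv⟩, rfl⟩ := hx
                have hne2 : w ≠ v := fun h => hvF (h ▸ hwF)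
                have : w < v := lt_of_le_of_ne (not_lt.1 hwv) hne2
                exact Finset.mem_range.2 this
              have := Finset.card_le_card hsub2
              rwa [Finset.card_image_of_injective _ Fin.val_injective,
                Finset.card_range] at this
            have hbigcard : σ.card ≤ Fbig.card := by
              have hsplit : Fbig.card + (F.filter (fun x => ¬ v < x)).card = F.card := by
                rw [hFbig]
                rw [Finset.card_filter_add_card_filter_not]
              omega
            have hss : σ.erase v ⊂ Fbig := by
              refine hτbig.ssubset_of_ne (fun h => ?_)
              have hec : (σ.erase v).card = σ.card - 1 := Finset.card_erase_of_mem hv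
              have h1 : 1 ≤ σ.card := Finset.card_pos.2 hσne
              rw [h] at hec
              omega
            obtain ⟨w, hwbig, hwτ⟩ := Finset.exists_of_ssubset hss
            have hwF : w ∈ F := (Finset.mem_filter.1 hwbig).1
            have hvw : v < w := (Finset.mem_filter.1 hwbig).2
            have hF' : insert v (F.erase w) ∈ Γ := hsh F hFΓ w hwF v hvw
            refine hdown _ hF' σ ?_
            intro x hx
            rcases eq_or_ne x v with rfl | hxv
            · exact Finset.mem_insert_self _ _
            · refine Finset.mem_insert_of_mem (Finset.mem_erase.2 ⟨?_, hτF (Finset.mem_erase.2 ⟨hxv, hx⟩)⟩)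
              intro h
              exact hwτ (h ▸ Finset.mem_erase.2 ⟨hxv, hx⟩)
        exact hmnf.1 hσΓ
      exact ⟨(v : ℕ) + σ.card - d, by omega, by omega, hmnf, v, hv, hmin, by omega⟩
    · rintro ⟨j, _, _, h, _⟩
      exact h
end

section
/- Let Γ be a pure (d−1)-dimensional shifted complex on [n] and let σ ≠ γ be two minimal non-faces both lying in Σ_j (for some 1 ≤ j ≤ n−d). Then there exist s > j and a minimal non-face τ ∈ Σ_s with τ ⊆ σ ∪ γ. -/
open Finset

open scoped Classical

/-- Key lemma: in a shifted complex (downward closure not even needed), every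
non-face `S` contains a minimal non-face `τ` with `min τ + |τ| ≥ min S + |S|`. -/
lemma auxK {n : ℕ} (Γ : Finset (Finset (Fin n))) (hsh : IsShifted Γ)
    (hemp : (∅ : Finset (Fin n)) ∈ Γ) :
    ∀ N : ℕ, ∀ S : Finset (Fin n), S.card ≤ N → S ∉ Γ →
      ∃ τ, τ ⊆ S ∧ IsMinNonFace Γ τ ∧ ∃ v ∈ τ, (∀ w ∈ τ, v ≤ w) ∧
        ∀ u ∈ S, (∀ w ∈ S, u ≤ w) → (u : ℕ) + S.card ≤ (v : ℕ) + τ.card := by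
  intro N
  induction N with
  | zero =>
    intro S hcard hS
    have : S = ∅ := Finset.card_eq_zero.mp (Nat.le_zero.mp hcard)
    subst this
    exact absurd hemp hS
  | succ N ih =>
    intro S hcard hS
    have hSne : S.Nonempty := by
      rcases S.eq_empty_or_nonempty with rfl | h
      · exact absurd hemp hS
      · exact h
    set a := S.min' hSne with ha_def
    have haS : a ∈ S := S.min'_mem hSne
    by_cases he : S.erase a ∈ Γ
    · -- `S` is itself a minimal non-face
      refine ⟨S, Finset.Subset.refl S, ⟨hS, ?_⟩, a, haS,
        (fun w hw => S.min'_le w hw), ?_⟩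
      · intro y hy
        by_cases hya : y = a
        · subst hya; exact he
        · have hay : a < y := lt_of_le_of_ne (S.min'_le y hy) (Ne.symm hya)
          have hmem : y ∈ S.erase a := Finset.mem_erase.mpr ⟨hya, hy⟩
          have hstep := hsh (S.erase a) he y hmem a hay
          have heq : insert a ((S.erase a).erase y) = S.erase y := by
            rw [Finset.erase_right_comm]
            exact Finset.insert_erase (Finset.mem_erase.mpr ⟨fun h => hya h.symm, haS⟩)
          rwa [heq] at hstep
      · intro u hu hum
        have h1 : (u : ℕ) ≤ (a : ℕ) := hum a haS
        omega
    · have hpos : 1 ≤ S.card := Finset.card_pos.mpr hSne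
      have hcard' : (S.erase a).card ≤ N := by
        have := Finset.card_erase_of_mem haS
        omega
      obtain ⟨τ, hτsub, hτmnf, v, hvτ, hvmin, hbound⟩ := ih (S.erase a) hcard' he
      have hene : (S.erase a).Nonempty := by
        rcases (S.erase a).eq_empty_or_nonempty with h0 | h0
        · rw [h0] at he; exact absurd hemp he
        · exact h0
      set a' := (S.erase a).min' hene with ha'_def
      have ha'mem : a' ∈ S.erase a := (S.erase a).min'_mem hene
      have key := hbound a' ha'mem (fun w hw => (S.erase a).min'_le w hw)
      refine ⟨τ, hτsub.trans (Finset.erase_subset a S), hτmnf, v, hvτ, hvmin, ?_⟩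
      intro u hu hum
      have hua : (u : ℕ) ≤ (a : ℕ) := hum a haS
      have haa' : (a : ℕ) < (a' : ℕ) := by
        have h1 : a ≤ a' := S.min'_le a' (Finset.mem_of_mem_erase ha'mem)
        have h2 : a' ≠ a := (Finset.mem_erase.mp ha'mem).1
        exact lt_of_le_of_ne h1 (by simpa [Fin.ext_iff] using h2.symm)
      have hce : (S.erase a).card = S.card - 1 := Finset.card_erase_of_mem haS
      omega

/-- The main exchange step, assuming `min σ ≤` every element of `γ`. -/
lemma exchange_aux {n d j : ℕ} (Γ : Finset (Finset (Fin n)))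
    (hdc : ∀ s ∈ Γ, ∀ t ⊆ s, t ∈ Γ) (hsh : IsShifted Γ)
    (hemp : (∅ : Finset (Fin n)) ∈ Γ)
    (σ γ : Finset (Fin n)) (hσnf : IsMinNonFace Γ σ) (hγnf : γ ∉ Γ)
    (v : Fin n) (hvσ : v ∈ σ) (hvmin : ∀ w ∈ σ, v ≤ w)
    (hvcard : (v : ℕ) + σ.card = d + j)
    (hvγ : ∀ w ∈ γ, v ≤ w) (hne : σ ≠ γ) :
    ∃ s, j < s ∧ ∃ τ : Finset (Fin n), MemSigma Γ d s τ ∧ τ ⊆ σ ∪ γ := by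
  classical
  have hγσ : ¬ γ ⊆ σ := by
    intro hsub
    have hss : γ ⊂ σ := lt_of_le_of_ne hsub (Ne.symm hne)
    obtain ⟨y, hyσ, hyγ⟩ := Finset.exists_of_ssubset hss
    have hsub2 : γ ⊆ σ.erase y :=
      fun w hw => Finset.mem_erase.mpr ⟨fun h => hyγ (h ▸ hw), hsub hw⟩
    exact hγnf (hdc _ (hσnf.2 y hyσ) γ hsub2)
  obtain ⟨x, hxγ, hxσ⟩ := Finset.not_subset.mp hγσ
  have hvx : v < x := lt_of_le_of_ne (hvγ x hxγ) (fun h => hxσ (h ▸ hvσ))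
  set ρ := insert x (σ.erase v) with hρ_def
  have hxe : x ∉ σ.erase v := fun h => hxσ (Finset.mem_of_mem_erase h)
  have hρnf : ρ ∉ Γ := by
    intro hρ
    have hstep := hsh ρ hρ x (Finset.mem_insert_self x _) v hvx
    rw [hρ_def, Finset.erase_insert hxe, Finset.insert_erase hvσ] at hstep
    exact hσnf.1 hstep
  obtain ⟨τ, hτρ, hτmnf, v', hv'τ, hv'min, hbound⟩ :=
    auxK Γ hsh hemp ρ.card ρ le_rfl hρnf
  have hρne : ρ.Nonempty := ⟨x, Finset.mem_insert_self x _⟩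
  have hmρ : ρ.min' hρne ∈ ρ := ρ.min'_mem hρne
  have key := hbound (ρ.min' hρne) hmρ (fun w hw => ρ.min'_le w hw)
  have hm : (v : ℕ) < ((ρ.min' hρne : Fin n) : ℕ) := by
    rcases Finset.mem_insert.mp hmρ with h | h
    · rw [h]; exact hvx
    · have h1 : v ≤ ρ.min' hρne := hvmin _ (Finset.mem_of_mem_erase h)
      have h2 : ρ.min' hρne ≠ v := (Finset.mem_erase.mp h).1
      exact lt_of_le_of_ne h1 (by simpa [Fin.ext_iff] using h2.symm)
  have hρcard : ρ.card = σ.card := by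
    have h1 : 1 ≤ σ.card := Finset.card_pos.mpr ⟨v, hvσ⟩
    rw [hρ_def, Finset.card_insert_of_notMem hxe, Finset.card_erase_of_mem hvσ]
    omega
  have hbig : d + j + 1 ≤ (v' : ℕ) + τ.card := by omega
  refine ⟨(v' : ℕ) + τ.card - d, by omega, τ,
    ⟨hτmnf, v', hv'τ, hv'min, by omega⟩, ?_⟩
  intro w hw
  rcases Finset.mem_insert.mp (hτρ hw) with h | h
  · exact Finset.mem_union_right _ (h ▸ hxγ)
  · exact Finset.mem_union_left _ (Finset.mem_of_mem_erase h)

/-- Let `Γ` be a pure `(d-1)`-dimensional shifted complex on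
`[n]` and let `σ ≠ γ` be two minimal non-faces both in `Σ_j` (`1 ≤ j ≤ n - d`).
Then there are `s > j` and a minimal non-face `τ ∈ Σ_s` with `τ ⊆ σ ∪ γ`. -/
theorem shifted_sigma_exchange {n d : ℕ} (Γ : Finset (Finset (Fin n)))
    (hc : IsComplexOn Finset.univ Γ) (hsh : IsShifted Γ) (hp : IsPureDim Γ d)
    (j : ℕ) (hj1 : 1 ≤ j) (hj2 : j ≤ n - d)
    (σ γ : Finset (Fin n)) (hσ : MemSigma Γ d j σ) (hγ : MemSigma Γ d j γ)
    (hne : σ ≠ γ) :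
    ∃ s, j < s ∧ ∃ τ : Finset (Fin n), MemSigma Γ d s τ ∧ τ ⊆ σ ∪ γ := by
  obtain ⟨hσmnf, vσ, hvσ, hvσmin, hvσcard⟩ := hσ
  obtain ⟨hγmnf, vγ, hvγ, hvγmin, hvγcard⟩ := hγ
  have hemp : (∅ : Finset (Fin n)) ∈ Γ := by
    obtain ⟨⟨_, ⟨s0, hs0, _⟩⟩, _⟩ := hp
    exact hc.2.2 s0 hs0 ∅ (Finset.empty_subset _)
  have hdc := hc.2.2
  rcases le_total vσ vγ with h | h
  · exact exchange_aux Γ hdc hsh hemp σ γ hσmnf hγmnf.1 vσ hvσ hvσmin hvσcard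
      (fun w hw => le_trans h (hvγmin w hw)) hne
  · obtain ⟨s, hs, τ, hτ, hsub⟩ :=
      exchange_aux Γ hdc hsh hemp γ σ hγmnf hσmnf.1 vγ hvγ hvγmin hvγcard
        (fun w hw => le_trans h (hvσmin w hw)) hne.symm
    exact ⟨s, hs, τ, hτ, by rwa [Finset.union_comm] at hsub⟩
end

section
/- For any simplicial complex Γ on [n], there exists a deformation M of the Stanley-Reisner ideal I_Γ such that M is a generic monomial ideal. -/
open Finset

open scoped Classical

set_option synthInstance.maxHeartbeats 1000000

/-- The monomial `x^a` in `k[x_1,…,x_n]` with exponent vector `a : Fin n → ℕ`. -/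
noncomputable def mono (k : Type*) [CommSemiring k] {n : ℕ} (a : Fin n → ℕ) :
    MvPolynomial (Fin n) k :=
  MvPolynomial.monomial (Finsupp.equivFunOnFinite.symm a) 1

/-- The monomial ideal generated by the monomials with exponent vectors in `G`. -/
noncomputable def monIdeal (k : Type*) [CommSemiring k] {n : ℕ}
    (G : Finset (Fin n → ℕ)) : Ideal (MvPolynomial (Fin n) k) :=
  Ideal.span ((fun a => mono k a) '' (G : Set (Fin n → ℕ)))

/-- Exponent vector of the lcm of the monomials with exponents in `σ`. -/
def lcmExp {n : ℕ} (σ : Finset (Fin n → ℕ)) : Fin n → ℕ :=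
  fun i => σ.sup (fun a => a i)

/-- `c` strictly divides `b`: whenever `c` has positive degree in a variable,
its degree there is strictly smaller than that of `b`. -/
def StrictlyDivides {n : ℕ} (c b : Fin n → ℕ) : Prop :=
  ∀ i, 0 < c i → c i < b i

/-- `G` is the set of exponent vectors of the minimal generators of a *generic*
monomial ideal: no generator divides another, and for any two distinct
generators with the same positive degree in some variable there is a third
generator strictly dividing their lcm. -/
def IsGeneric {n : ℕ} (G : Finset (Fin n → ℕ)) : Prop :=
  (∀ a ∈ G, ∀ b ∈ G, a ≤ b → a = b) ∧
  ∀ a ∈ G, ∀ b ∈ G, a ≠ b → (∃ h, a h = b h ∧ 0 < a h) →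
    ∃ c ∈ G, c ≠ a ∧ c ≠ b ∧ StrictlyDivides c (fun i => max (a i) (b i))

/-- `σ ⊆ G` is a face of the Scarf complex of the monomial ideal with minimal
generating exponents `G`: its lcm is attained by no other subset of `G`. -/
def ScarfFace {n : ℕ} (G σ : Finset (Fin n → ℕ)) : Prop :=
  σ ⊆ G ∧ ∀ τ ⊆ G, τ ≠ σ → lcmExp τ ≠ lcmExp σ

/-- The dimension (as an integer, so the empty-complex value `-1` is allowed)
of the Scarf complex `Δ_M`: one less than the largest cardinality of a face. -/
noncomputable def scarfDim {n : ℕ} (G : Finset (Fin n → ℕ)) : ℤ :=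
  (((G.powerset.filter (fun σ => ScarfFace G σ)).sup Finset.card : ℕ) : ℤ) - 1

/-- `σ` is a face of `V(M)`, the simplicial complex whose Stanley-Reisner ideal
is `rad M`: no generator of `M` has support contained in `σ`. -/
def VFace {n : ℕ} (G : Finset (Fin n → ℕ)) (σ : Finset (Fin n)) : Prop :=
  ∀ a ∈ G, ¬ (Finset.univ.filter (fun i => 0 < a i) ⊆ σ)

/-- The dimension of `V(M)` as an integer. -/
noncomputable def vDim {n : ℕ} (G : Finset (Fin n → ℕ)) : ℤ :=
  ((((Finset.univ : Finset (Fin n)).powerset.filter (fun σ => VFace G σ)).sup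
    Finset.card : ℕ) : ℤ) - 1

/-- The quotient `S/I` of the polynomial ring `S = k[x_1,…,x_n]` is
Cohen-Macaulay: some regular sequence on `S/I` consisting of elements of the
irrelevant maximal ideal `⟨x_1,…,x_n⟩` has length equal to the Krull dimension
of `S/I`. -/
def IsCMQuotient (k : Type*) [Field k] {n : ℕ}
    (I : Ideal (MvPolynomial (Fin n) k)) : Prop :=
  ∃ rs : List (MvPolynomial (Fin n) k),
    (∀ r ∈ rs, r ∈ Ideal.span (Set.range (MvPolynomial.X : Fin n → MvPolynomial (Fin n) k))) ∧
    RingTheory.Sequence.IsRegular (MvPolynomial (Fin n) k ⧸ I)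
      (rs.map (Ideal.Quotient.mk I)) ∧
    (rs.length : WithBot (WithTop ℕ)) = ringKrullDim (MvPolynomial (Fin n) k ⧸ I)

/-- The finite set of minimal non-faces of `Γ`. -/
noncomputable def minNonFaces {n : ℕ} (Γ : Finset (Finset (Fin n))) :
    Finset (Finset (Fin n)) :=
  (Finset.univ : Finset (Finset (Fin n))).filter (fun σ => IsMinNonFace Γ σ)

/-- For any simplicial complex `Γ` on `[n]` there is a
deformation of the Stanley-Reisner ideal `I_Γ` (whose minimal generators
correspond to the minimal non-faces of `Γ`) that is a generic monomial ideal: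
an assignment `e` of exponent vectors, one to each minimal non-face, with
Minimal non-faces of a complex form an antichain. -/
lemma minNonFace_antichain {n : ℕ} {Γ : Finset (Finset (Fin n))}
    (hdown : ∀ σ ∈ Γ, ∀ τ ⊆ σ, τ ∈ Γ)
    {σ τ : Finset (Fin n)} (hσ : IsMinNonFace Γ σ) (hτ : IsMinNonFace Γ τ)
    (hsub : σ ⊆ τ) : σ = τ := by
  by_contra hne
  obtain ⟨i, hiτ, hiσ⟩ := Finset.exists_of_ssubset (lt_of_le_of_ne hsub hne)
  have h1 : τ.erase i ∈ Γ := hτ.2 i hiτ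
  have h2 : σ ⊆ τ.erase i := fun j hj =>
    Finset.mem_erase.mpr ⟨fun h => hiσ (h ▸ hj), hsub hj⟩
  exact hσ.1 (hdown _ h1 _ h2)

/-- **Statement 11 helper.**
support exactly that non-face, whose image is a generic set of generators. -/
theorem exists_generic_deformation {n : ℕ} (Γ : Finset (Finset (Fin n)))
    (hΓ : IsComplexOn Finset.univ Γ) :
    ∃ e : Finset (Fin n) → (Fin n → ℕ),
      (∀ σ ∈ minNonFaces Γ, ∀ i : Fin n, 0 < e σ i ↔ i ∈ σ) ∧
      IsGeneric ((minNonFaces Γ).image e) := by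
  classical
  set f : Finset (Fin n) → ℕ := fun σ => Encodable.encode σ + 1 with hf
  have hfpos : ∀ σ, 0 < f σ := fun σ => Nat.succ_pos _
  have hfinj : Function.Injective f := fun σ τ h =>
    Encodable.encode_injective (Nat.succ_injective h)
  refine ⟨fun σ i => if i ∈ σ then f σ else 0, ?_, ?_, ?_⟩
  · intro σ _ i
    constructor
    · intro h
      by_contra hc
      simp [hc] at h
    · intro h
      simp [h, hfpos]
  · rintro a ha b hb hab
    simp only [Finset.mem_image] at ha hb
    obtain ⟨σ, hσ, rfl⟩ := ha
    obtain ⟨τ, hτ, rfl⟩ := hb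
    have hσm : IsMinNonFace Γ σ := by
      have := Finset.mem_filter.mp hσ; exact this.2
    have hτm : IsMinNonFace Γ τ := by
      have := Finset.mem_filter.mp hτ; exact this.2
    have hsub : σ ⊆ τ := by
      intro i hi
      have := hab i
      simp only [hi, if_pos] at this
      by_contra hc
      simp [hc, hfpos] at this
    have : σ = τ := minNonFace_antichain hΓ.2.2 hσm hτm hsub
    subst this; rfl
  · rintro a ha b hb hne ⟨h, hab, hpos⟩
    exfalso
    simp only [Finset.mem_image] at ha hb
    obtain ⟨σ, hσ, rfl⟩ := ha
    obtain ⟨τ, hτ, rfl⟩ := hb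
    have hσh : h ∈ σ := by
      by_contra hc; simp [hc] at hpos
    have hτh : h ∈ τ := by
      by_contra hc
      simp only [hσh, hc, if_true, if_false] at hab
      exact absurd hab (Nat.succ_ne_zero _)
    simp only [hσh, hτh, if_true] at hab
    exact hne (by rw [hfinj hab])
end

section
/- Let M be a generic monomial ideal whose Scarf complex has dimension equal to codim(M) − 1 and with dim V(M) = dim(S/M) − 1, i.e., dim(Δ_M) + dim(V(M)) = n − 2. Then every facet of the extended Scarf complex Δ_{M*} contains exactly codim(M) original generators of M and exactly dim(S/M) of the added pure powers x_i^D. -/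
open Finset

open scoped Classical

set_option synthInstance.maxHeartbeats 1000000

/-- The exponent vectors of the pure powers `x_1^D, …, x_n^D`. -/
noncomputable def purePowers (n D : ℕ) : Finset (Fin n → ℕ) :=
  Finset.univ.image (fun i : Fin n => fun j : Fin n => if j = i then D else 0)


section ScarfAux

variable {n : ℕ}

/-- The pure power exponent vector `x_i^D`. -/
def pureExp (n D : ℕ) (i : Fin n) : Fin n → ℕ := fun j => if j = i then D else 0

lemma mem_purePowers {D : ℕ} {a : Fin n → ℕ} :
    a ∈ purePowers n D ↔ ∃ i, a = pureExp n D i := by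
  simp only [purePowers, Finset.mem_image, Finset.mem_univ, true_and, pureExp]
  constructor
  · rintro ⟨i, hi⟩; exact ⟨i, hi.symm⟩
  · rintro ⟨i, hi⟩; exact ⟨i, hi.symm⟩

lemma pureExp_mem {D : ℕ} (i : Fin n) : pureExp n D i ∈ purePowers n D :=
  mem_purePowers.2 ⟨i, rfl⟩

lemma pureExp_self {D : ℕ} (i : Fin n) : pureExp n D i i = D := by simp [pureExp]

lemma pureExp_ne {D : ℕ} {i j : Fin n} (h : j ≠ i) : pureExp n D i j = 0 := by
  simp [pureExp, h]

lemma pureExp_injective {D : ℕ} (hD : 0 < D) :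
    Function.Injective (pureExp n D) := by
  intro i j h
  by_contra hij
  have h1 := congrFun h i
  rw [pureExp_self, pureExp_ne (fun hh => hij hh)] at h1
  omega

lemma le_lcmExp {σ : Finset (Fin n → ℕ)} {a : Fin n → ℕ} (ha : a ∈ σ) (i : Fin n) :
    a i ≤ lcmExp σ i := Finset.le_sup (f := fun a => a i) ha

lemma lcmExp_mono {σ τ : Finset (Fin n → ℕ)} (h : σ ⊆ τ) (i : Fin n) :
    lcmExp σ i ≤ lcmExp τ i := Finset.sup_mono h

lemma lcmExp_eq_of {σ τ : Finset (Fin n → ℕ)} (hστ : σ ⊆ τ)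
    (h : ∀ a ∈ τ, ∀ i, a i ≤ lcmExp σ i) : lcmExp τ = lcmExp σ := by
  funext i
  exact le_antisymm (Finset.sup_le fun a ha => h a ha i) (lcmExp_mono hστ i)

lemma exists_attain {σ : Finset (Fin n → ℕ)} {i : Fin n} (h : 0 < lcmExp σ i) :
    ∃ a ∈ σ, a i = lcmExp σ i := by
  rcases σ.eq_empty_or_nonempty with rfl | hne
  · simp [lcmExp] at h
  · obtain ⟨a, ha, hv⟩ := Finset.exists_mem_eq_sup σ hne (fun a => a i)
    exact ⟨a, ha, hv.symm⟩

lemma lcmExp_erase_eq {σ : Finset (Fin n → ℕ)} {b : Fin n → ℕ} (hb : b ∈ σ)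
    (h : ∀ i, 0 < b i → ∃ a ∈ σ, a ≠ b ∧ b i ≤ a i) :
    lcmExp (σ.erase b) = lcmExp σ := by
  funext i
  have hins : lcmExp σ i = max (b i) (lcmExp (σ.erase b) i) := by
    conv_lhs => rw [show σ = insert b (σ.erase b) from (Finset.insert_erase hb).symm]
    simp [lcmExp, Finset.sup_insert]
  rcases Nat.eq_zero_or_pos (b i) with h0 | hpos
  · rw [hins, h0]; omega
  · obtain ⟨a, haσ, hane, hle⟩ := h i hpos
    have haer : a ∈ σ.erase b := Finset.mem_erase.2 ⟨hane, haσ⟩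
    have h2 : b i ≤ lcmExp (σ.erase b) i := le_trans hle (le_lcmExp haer i)
    rw [hins]; omega

/-- If `c ∈ G'` is dominated by the lcm of a Scarf face `σ`, then `c ∈ σ`. -/
lemma scarf_mem_of_le {G' σ : Finset (Fin n → ℕ)} (hσ : ScarfFace G' σ)
    {c : Fin n → ℕ} (hc : c ∈ G') (hcm : ∀ i, c i ≤ lcmExp σ i) : c ∈ σ := by
  by_contra hcσ
  refine hσ.2 (insert c σ) (Finset.insert_subset hc hσ.1)
    (fun h => hcσ (h ▸ Finset.mem_insert_self c σ)) ?_
  refine lcmExp_eq_of (Finset.subset_insert c σ) ?_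
  intro a ha i
  rcases Finset.mem_insert.1 ha with rfl | ha
  · exact hcm i
  · exact le_lcmExp ha i

/-- Every element of a Scarf face uniquely attains the lcm in some variable
(here: attains positively). -/
lemma scarf_attains {G' σ : Finset (Fin n → ℕ)} (hσ : ScarfFace G' σ)
    {b : Fin n → ℕ} (hb : b ∈ σ) : ∃ i, b i = lcmExp σ i ∧ 0 < b i := by
  by_contra hno
  push_neg at hno
  refine hσ.2 (σ.erase b) ((Finset.erase_subset b σ).trans hσ.1)
    (fun h => (Finset.notMem_erase b σ) (h.symm ▸ hb)) ?_
  refine lcmExp_erase_eq hb ?_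
  intro i hpos
  have hlt : b i < lcmExp σ i := by
    have h1 := le_lcmExp hb i
    have h2 := hno i
    omega
  obtain ⟨a, ha, hai⟩ := exists_attain (lt_of_le_of_lt (Nat.zero_le _) hlt)
  refine ⟨a, ha, ?_, by omega⟩
  intro hcon
  rw [hcon] at hai
  omega

/-- The second (genericity) condition, abstracted. -/
def Gen2 {n : ℕ} (G : Finset (Fin n → ℕ)) : Prop :=
  ∀ a ∈ G, ∀ b ∈ G, a ≠ b → (∃ h, a h = b h ∧ 0 < a h) →
    ∃ c ∈ G, c ≠ a ∧ c ≠ b ∧ StrictlyDivides c (fun i => max (a i) (b i))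

/-- In a Scarf face of a generic (in the `Gen2` sense) set of exponents, no two
distinct elements share a positive coordinate value. -/
lemma scarf_no_share {G' σ : Finset (Fin n → ℕ)} (hgen2 : Gen2 G')
    (hσ : ScarfFace G' σ) {a b : Fin n → ℕ} (ha : a ∈ σ) (hb : b ∈ σ)
    (hab : a ≠ b) {i : Fin n} (hi : a i = b i) (hpos : 0 < a i) : False := by
  obtain ⟨c, hcG, hca, hcb, hsd⟩ := hgen2 a (hσ.1 ha) b (hσ.1 hb) hab ⟨i, hi, hpos⟩
  have hcm : ∀ j, c j ≤ lcmExp σ j := by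
    intro j
    rcases Nat.eq_zero_or_pos (c j) with h0 | hp
    · omega
    · have h1 := hsd j hp
      have h2 := le_lcmExp ha j
      have h3 := le_lcmExp hb j
      simp only at h1
      omega
  have hcσ : c ∈ σ := scarf_mem_of_le hσ hcG hcm
  refine hσ.2 (σ.erase c) ((Finset.erase_subset c σ).trans hσ.1)
    (fun h => (Finset.notMem_erase c σ) (h.symm ▸ hcσ)) ?_
  refine lcmExp_erase_eq hcσ ?_
  intro j hp
  have h1 := hsd j hp
  simp only at h1
  rcases le_or_gt (a j) (b j) with hle | hlt
  · refine ⟨b, hb, ?_, by omega⟩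
    intro hcon; rw [hcon] at h1 hle; omega
  · refine ⟨a, ha, ?_, by omega⟩
    intro hcon; rw [hcon] at h1 hlt; omega

lemma gen2_union {G : Finset (Fin n → ℕ)} {D : ℕ} (hgen : IsGeneric G)
    (hD : ∀ a ∈ G, ∀ i, a i < D) : Gen2 (G ∪ purePowers n D) := by
  rintro a ha b hb hab ⟨h, hh, hp⟩
  rcases Finset.mem_union.1 ha with haG | haP
  · rcases Finset.mem_union.1 hb with hbG | hbP
    · obtain ⟨c, hc, h1, h2, h3⟩ := hgen.2 a haG b hbG hab ⟨h, hh, hp⟩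
      exact ⟨c, Finset.mem_union_left _ hc, h1, h2, h3⟩
    · exfalso
      obtain ⟨i, rfl⟩ := mem_purePowers.1 hbP
      have h4 : h = i := by
        by_contra hne
        rw [pureExp_ne hne] at hh; omega
      subst h4
      rw [pureExp_self] at hh
      have := hD a haG h
      omega
  · exfalso
    obtain ⟨i, rfl⟩ := mem_purePowers.1 haP
    have h4 : h = i := by
      by_contra hne
      rw [pureExp_ne hne] at hp; omega
    subst h4
    rw [pureExp_self] at hh hp
    rcases Finset.mem_union.1 hb with hbG | hbP
    · have := hD b hbG h; omega
    · obtain ⟨i', rfl⟩ := mem_purePowers.1 hbP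
      have h5 : h = i' := by
        by_contra hne
        rw [pureExp_ne hne] at hh; omega
      exact hab (by rw [h5])

end ScarfAux


section ScarfExtend

variable {n : ℕ}

/-- Core extension lemma: a face of the extended Scarf complex with fewer than
`n` elements is not a facet. -/
lemma scarf_extend {G : Finset (Fin n → ℕ)} {D : ℕ} (hgen : IsGeneric G)
    (hD : ∀ a ∈ G, ∀ i, a i < D) (hD0 : 0 < D) {σ : Finset (Fin n → ℕ)}
    (hσ : ScarfFace (G ∪ purePowers n D) σ) (hcard : σ.card < n) :
    ∃ a, a ∉ σ ∧ ScarfFace (G ∪ purePowers n D) (insert a σ) := by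
  have hgen2 : Gen2 (G ∪ purePowers n D) := gen2_union hgen hD
  have hbound : ∀ x ∈ G ∪ purePowers n D, ∀ j, x j ≤ D := by
    intro x hx j
    rcases Finset.mem_union.1 hx with hxG | hxP
    · exact le_of_lt (hD x hxG j)
    · obtain ⟨i, rfl⟩ := mem_purePowers.1 hxP
      by_cases hji : j = i
      · subst hji; rw [pureExp_self]
      · rw [pureExp_ne hji]; omega
  have hmD : ∀ j, lcmExp σ j ≤ D := fun j =>
    Finset.sup_le fun x hx => hbound x (hσ.1 hx) j
  -- choose a suitable coordinate i
  have hsel : ∃ i : Fin n, lcmExp σ i < D ∧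
      ∀ c ∈ σ, c i = lcmExp σ i → 0 < c i →
        ∃ j, j ≠ i ∧ c j = lcmExp σ j ∧ 0 < c j := by
    by_contra hno
    have hφ : ∀ i : Fin n, ∃ x, x ∈ σ ∧ x i = lcmExp σ i ∧ 0 < x i ∧
        ∀ j, j ≠ i → x j = lcmExp σ j → ¬ 0 < x j := by
      intro i
      by_cases hiD : lcmExp σ i < D
      · have h1 : ¬ (∀ c ∈ σ, c i = lcmExp σ i → 0 < c i →
            ∃ j, j ≠ i ∧ c j = lcmExp σ j ∧ 0 < c j) :=
          fun hP => hno ⟨i, hiD, hP⟩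
        push_neg at h1
        obtain ⟨c, hc1, hc2, hc3, hc4⟩ := h1
        refine ⟨c, hc1, hc2, hc3, ?_⟩
        intro j hj hjm hp
        have := hc4 j hj hjm
        omega
      · have hmi : lcmExp σ i = D := le_antisymm (hmD i) (not_lt.1 hiD)
        have hpos : 0 < lcmExp σ i := by omega
        obtain ⟨x, hxσ, hxi⟩ := exists_attain hpos
        have hxG' := hσ.1 hxσ
        rcases Finset.mem_union.1 hxG' with hxG | hxP
        · exact absurd (hD x hxG i) (by omega)
        · obtain ⟨i', rfl⟩ := mem_purePowers.1 hxP
          have hii' : i = i' := by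
            by_contra hne
            rw [pureExp_ne hne] at hxi
            omega
          subst hii'
          refine ⟨pureExp n D i, hxσ, hxi, by rw [pureExp_self]; omega, ?_⟩
          intro j hj hjm
          rw [pureExp_ne hj]
          omega
    choose φ hφ1 hφ2 hφ3 hφ4 using hφ
    have hinj : Set.InjOn φ (Finset.univ : Finset (Fin n)) := by
      intro i _ i' _ hii'
      by_contra hne
      have e1 : φ i i' = lcmExp σ i' := by rw [hii']; exact hφ2 i'
      have e2 : 0 < φ i i' := by rw [hii']; exact hφ3 i'
      exact hφ4 i i' (fun hh => hne hh.symm) e1 e2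
    have hle := Finset.card_le_card_of_injOn φ (fun i _ => hφ1 i) hinj
    rw [Finset.card_univ, Fintype.card_fin] at hle
    omega
  obtain ⟨i, hiD, hcase⟩ := hsel
  -- the minimiser over the "pivot" set F
  set F := (G ∪ purePowers n D).filter
    (fun x => (∀ j, j ≠ i → x j ≤ lcmExp σ j) ∧ lcmExp σ i < x i) with hFdef
  have hpF : pureExp n D i ∈ F := by
    refine Finset.mem_filter.2 ⟨Finset.mem_union_right _ (pureExp_mem i), ?_, ?_⟩
    · intro j hj; rw [pureExp_ne hj]; omega
    · rw [pureExp_self]; exact hiD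
  obtain ⟨a, haF, hamin⟩ := F.exists_min_image (fun x => x i) ⟨_, hpF⟩
  obtain ⟨haG', haj, hai⟩ : a ∈ G ∪ purePowers n D ∧
      (∀ j, j ≠ i → a j ≤ lcmExp σ j) ∧ lcmExp σ i < a i := by
    have := Finset.mem_filter.1 haF
    exact ⟨this.1, this.2.1, this.2.2⟩
  have haσ : a ∉ σ := fun h => by have := le_lcmExp h i; omega
  have hm' : ∀ j, lcmExp (insert a σ) j = max (a j) (lcmExp σ j) := by
    intro j; simp [lcmExp, Finset.sup_insert]
  have hm'i : lcmExp (insert a σ) i = a i := by rw [hm' i]; omega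
  have hm'j : ∀ j, j ≠ i → lcmExp (insert a σ) j = lcmExp σ j := by
    intro j hj; rw [hm' j]; have := haj j hj; omega
  have Hc : ∀ c ∈ σ, (∀ j, j ≠ i → 0 < c j → c j < lcmExp σ j) → False := by
    intro c hc hlt
    obtain ⟨j, hj1, hj2⟩ := scarf_attains hσ hc
    by_cases hji : j = i
    · subst hji
      obtain ⟨j₀, hj₀, hh1, hh2⟩ := hcase c hc hj1 hj2
      have := hlt j₀ hj₀ hh2
      omega
    · have := hlt j hji hj2
      omega
  have no_pair : ∀ x y : Fin n → ℕ, x ∈ G ∪ purePowers n D →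
      y ∈ G ∪ purePowers n D → x ≠ y → (∃ h, x h = y h ∧ 0 < x h) →
      (∀ j, j ≠ i → x j ≤ lcmExp σ j ∧ y j ≤ lcmExp σ j) →
      x i ≤ a i → y i ≤ a i → False := by
    intro x y hx hy hxy hsh hbnd hxi hyi
    obtain ⟨c, hcG, hcx, hcy, hsd⟩ := hgen2 x hx y hy hxy hsh
    by_cases hci : lcmExp σ i < c i
    · have hcF : c ∈ F := by
        refine Finset.mem_filter.2 ⟨hcG, ?_, hci⟩
        intro j hj
        rcases Nat.eq_zero_or_pos (c j) with hcz | hp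
        · omega
        · have hh1 := hsd j hp
          have hh2 := (hbnd j hj).1
          have hh3 := (hbnd j hj).2
          simp only at hh1
          omega
      have h4 := hamin c hcF
      have h5 := hsd i (by omega)
      simp only at h5
      omega
    · have hcm : ∀ j, c j ≤ lcmExp σ j := by
        intro j
        by_cases hj : j = i
        · subst hj; omega
        · rcases Nat.eq_zero_or_pos (c j) with hcz | hp
          · omega
          · have hh1 := hsd j hp
            have hh2 := (hbnd j hj).1
            have hh3 := (hbnd j hj).2
            simp only at hh1
            omega
      have hcσ : c ∈ σ := scarf_mem_of_le hσ hcG hcm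
      refine Hc c hcσ ?_
      intro j hj hp
      have hh1 := hsd j hp
      have hh2 := (hbnd j hj).1
      have hh3 := (hbnd j hj).2
      simp only at hh1
      omega
  have S1 : ∀ x, x ∈ G ∪ purePowers n D →
      (∀ j, x j ≤ lcmExp (insert a σ) j) → lcmExp σ i < x i → x = a := by
    intro x hx hxle hxi
    by_contra hxa
    have hxj : ∀ j, j ≠ i → x j ≤ lcmExp σ j := by
      intro j hj
      have := hxle j
      rwa [hm'j j hj] at this
    have hxF : x ∈ F := Finset.mem_filter.2 ⟨hx, hxj, hxi⟩
    have hh1 : a i ≤ x i := hamin x hxF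
    have hh2 : x i ≤ a i := by
      have := hxle i
      rwa [hm'i] at this
    refine no_pair a x haG' hx (fun h => hxa h.symm) ⟨i, by omega, by omega⟩
      ?_ le_rfl (by omega)
    intro j hj
    exact ⟨haj j hj, hxj j hj⟩
  refine ⟨a, haσ, Finset.insert_subset haG' hσ.1, ?_⟩
  intro τ hτ hne hlcm
  apply hne
  have hτle : ∀ x ∈ τ, ∀ j, x j ≤ lcmExp (insert a σ) j := by
    intro x hx j
    have := le_lcmExp hx j
    rwa [hlcm] at this
  have haτ : a ∈ τ := by
    have hpos : 0 < lcmExp τ i := by rw [hlcm, hm'i]; omega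
    obtain ⟨x, hxτ, hxi⟩ := exists_attain hpos
    have hxa : x = a := S1 x (hτ hxτ) (hτle x hxτ) (by rw [hlcm, hm'i] at hxi; omega)
    exact hxa ▸ hxτ
  have herase : ∀ x ∈ τ, x ≠ a → ∀ j, x j ≤ lcmExp σ j := by
    intro x hx hxa j
    by_cases hj : j = i
    · subst hj
      by_contra hlt
      exact hxa (S1 x (hτ hx) (hτle x hx) (by omega))
    · have := hτle x hx j
      rwa [hm'j j hj] at this
  have hsub : τ.erase a ⊆ σ := by
    have hun : σ ∪ τ.erase a = σ := by
      by_contra hneq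
      refine hσ.2 (σ ∪ τ.erase a) (Finset.union_subset hσ.1
        ((Finset.erase_subset a τ).trans hτ)) hneq ?_
      refine lcmExp_eq_of Finset.subset_union_left ?_
      intro x hx j
      rcases Finset.mem_union.1 hx with hx | hx
      · exact le_lcmExp hx j
      · obtain ⟨hxa, hxτ⟩ := Finset.mem_erase.1 hx
        exact herase x hxτ hxa j
    intro x hx
    rw [← hun]
    exact Finset.mem_union_right _ hx
  have hστ : σ ⊆ τ := by
    intro b' hb'
    by_contra hb'τ
    obtain ⟨j₀, hj₀i, hj₀1, hj₀2⟩ : ∃ j₀, j₀ ≠ i ∧ b' j₀ = lcmExp σ j₀ ∧ 0 < b' j₀ := by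
      obtain ⟨j, hj1, hj2⟩ := scarf_attains hσ hb'
      by_cases hji : j = i
      · subst hji
        obtain ⟨j₀, hh1, hh2, hh3⟩ := hcase b' hb' hj1 hj2
        exact ⟨j₀, hh1, hh2, hh3⟩
      · exact ⟨j, hji, hj1, hj2⟩
    have hpos : 0 < lcmExp τ j₀ := by rw [hlcm, hm'j j₀ hj₀i]; omega
    obtain ⟨x, hxτ, hxj₀⟩ := exists_attain hpos
    rw [hlcm, hm'j j₀ hj₀i] at hxj₀
    by_cases hxa : x = a
    · rw [hxa] at hxj₀
      refine no_pair a b' haG' (hσ.1 hb') (fun h => haσ (h ▸ hb'))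
        ⟨j₀, by omega, by omega⟩ ?_ le_rfl ?_
      · intro j hj
        exact ⟨haj j hj, le_lcmExp hb' j⟩
      · have := le_lcmExp hb' i
        omega
    · have hxσ : x ∈ σ := hsub (Finset.mem_erase.2 ⟨hxa, hxτ⟩)
      have hxb' : x ≠ b' := fun h => hb'τ (h ▸ hxτ)
      exact scarf_no_share hgen2 hσ hxσ hb' hxb' (i := j₀) (by omega) (by omega)
  refine Finset.Subset.antisymm ?_ (Finset.insert_subset haτ hστ)
  intro x hx
  by_cases hxa : x = a
  · exact hxa ▸ Finset.mem_insert_self a σ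
  · exact Finset.mem_insert_of_mem (hsub (Finset.mem_erase.2 ⟨hxa, hx⟩))

/-- The restriction of the extended Scarf complex to `G` lands in `Δ_M`. -/
lemma scarf_restrict {G P σ : Finset (Fin n → ℕ)} (hdisj : ∀ x ∈ P, x ∉ G)
    (hσ : ScarfFace (G ∪ P) σ) : ScarfFace G (σ ∩ G) := by
  refine ⟨Finset.inter_subset_right, ?_⟩
  intro τ hτ hne hlcm
  refine hσ.2 (τ ∪ σ ∩ P) (Finset.union_subset (hτ.trans Finset.subset_union_left)
    (Finset.inter_subset_right.trans Finset.subset_union_right)) ?_ ?_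
  · intro h
    apply hne
    ext x
    constructor
    · intro hx
      exact Finset.mem_inter.2 ⟨h ▸ Finset.mem_union_left _ hx, hτ hx⟩
    · intro hx
      obtain ⟨hxσ, hxG⟩ := Finset.mem_inter.1 hx
      rcases Finset.mem_union.1 (h.symm ▸ hxσ : x ∈ τ ∪ σ ∩ P) with hx' | hx'
      · exact hx'
      · exact absurd hxG (hdisj x (Finset.mem_inter.1 hx').2)
  · have hσeq : σ ∩ G ∪ σ ∩ P = σ := by
      rw [← Finset.inter_union_distrib_left]
      exact Finset.inter_eq_left.2 hσ.1
    funext j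
    calc lcmExp (τ ∪ σ ∩ P) j = max (lcmExp τ j) (lcmExp (σ ∩ P) j) := by
          simp [lcmExp, Finset.sup_union]
      _ = max (lcmExp (σ ∩ G) j) (lcmExp (σ ∩ P) j) := by rw [hlcm]
      _ = lcmExp (σ ∩ G ∪ σ ∩ P) j := by simp [lcmExp, Finset.sup_union]
      _ = lcmExp σ j := by rw [hσeq]

/-- The pure powers occurring in a face of the extended Scarf complex give a
face of `V(M)`. -/
lemma v_restrict {G : Finset (Fin n → ℕ)} {D : ℕ}
    (hD : ∀ a ∈ G, ∀ i, a i < D) {σ : Finset (Fin n → ℕ)}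
    (hσ : ScarfFace (G ∪ purePowers n D) σ) :
    VFace G (Finset.univ.filter (fun i => pureExp n D i ∈ σ)) := by
  intro a haG hsupp
  have hmem : ∀ j, 0 < a j → pureExp n D j ∈ σ := by
    intro j hj
    have := hsupp (Finset.mem_filter.2 ⟨Finset.mem_univ j, hj⟩)
    exact (Finset.mem_filter.1 this).2
  by_cases haσ : a ∈ σ
  · refine hσ.2 (σ.erase a) ((Finset.erase_subset a σ).trans hσ.1)
      (fun h => (Finset.notMem_erase a σ) (h.symm ▸ haσ)) ?_
    refine lcmExp_erase_eq haσ ?_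
    intro j hj
    refine ⟨pureExp n D j, hmem j hj, ?_, ?_⟩
    · intro hcon
      have h1 := congrFun hcon j
      rw [pureExp_self] at h1
      have := hD a haG j
      omega
    · rw [pureExp_self]
      exact le_of_lt (hD a haG j)
  · refine hσ.2 (insert a σ) (Finset.insert_subset (Finset.mem_union_left _ haG) hσ.1)
      (fun h => haσ (h ▸ Finset.mem_insert_self a σ)) ?_
    refine lcmExp_eq_of (Finset.subset_insert a σ) ?_
    intro x hx j
    rcases Finset.mem_insert.1 hx with rfl | hx
    · rcases Nat.eq_zero_or_pos (x j) with hz | hp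
      · omega
      · have h1 := le_lcmExp (hmem j hp) j
        rw [pureExp_self] at h1
        have h2 := hD x haG j
        omega
    · exact le_lcmExp hx j

end ScarfExtend

/-- Let `M` be a generic monomial ideal with
`dim Δ_M = codim M - 1` and `dim V(M) = dim(S/M) - 1` (so
`dim Δ_M + dim V(M) = n - 2`).  Then every facet of the extended Scarf complex
`Δ_{M*}` (where `M* = M + ⟨x_1^D,…,x_n^D⟩`, `D` larger than every exponent of a
generator) contains exactly `codim M` original generators of `M` and exactly
`dim(S/M)` of the pure powers `x_i^D`. -/
theorem extended_scarf_facets (k : Type*) [Field k] {n : ℕ}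
    (G : Finset (Fin n → ℕ)) (hG : G.Nonempty) (h0 : ∀ a ∈ G, a ≠ 0)
    (hgen : IsGeneric G) (D : ℕ) (hD : ∀ a ∈ G, ∀ i, a i < D)
    (c dd : ℕ) (hcodim : c + dd = n)
    (hdd : ringKrullDim (MvPolynomial (Fin n) k ⧸ monIdeal k G)
      = (dd : WithBot (WithTop ℕ)))
    (hscarf : scarfDim G = (c : ℤ) - 1) (hv : vDim G = (dd : ℤ) - 1) :
    ∀ σ : Finset (Fin n → ℕ), ScarfFace (G ∪ purePowers n D) σ →
      (∀ τ, ScarfFace (G ∪ purePowers n D) τ → σ ⊆ τ → τ = σ) →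
      (σ ∩ G).card = c ∧ (σ ∩ purePowers n D).card = dd := by
  intro σ hσ hmax
  have hD0 : 0 < D := by
    obtain ⟨a₀, ha₀⟩ := hG
    have hne := h0 a₀ ha₀
    have hex : ∃ j, a₀ j ≠ 0 := by
      by_contra hcon
      push_neg at hcon
      exact hne (funext fun j => hcon j)
    obtain ⟨j, hj⟩ := hex
    have := hD a₀ ha₀ j
    omega
  have hdisj : ∀ x ∈ purePowers n D, x ∉ G := by
    intro x hx hxG
    obtain ⟨i, rfl⟩ := mem_purePowers.1 hx
    have := hD _ hxG i
    rw [pureExp_self] at this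
    omega
  have hsupS : (G.powerset.filter (fun σ => ScarfFace G σ)).sup Finset.card = c := by
    have h := hscarf
    unfold scarfDim at h
    omega
  have hsupV : ((Finset.univ : Finset (Fin n)).powerset.filter
      (fun σ => VFace G σ)).sup Finset.card = dd := by
    have h := hv
    unfold vDim at h
    omega
  have h1 : (σ ∩ G).card ≤ c := by
    rw [← hsupS]
    exact Finset.le_sup (Finset.mem_filter.2
      ⟨Finset.mem_powerset.2 Finset.inter_subset_right, scarf_restrict hdisj hσ⟩)
  have hTcard : (σ ∩ purePowers n D).card
      = (Finset.univ.filter (fun i => pureExp n D i ∈ σ)).card := by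
    have himg : σ ∩ purePowers n D
        = (Finset.univ.filter (fun i => pureExp n D i ∈ σ)).image (pureExp n D) := by
      ext x
      simp only [Finset.mem_inter, Finset.mem_image, Finset.mem_filter,
        Finset.mem_univ, true_and]
      constructor
      · rintro ⟨hxσ, hxP⟩
        obtain ⟨i, rfl⟩ := mem_purePowers.1 hxP
        exact ⟨i, hxσ, rfl⟩
      · rintro ⟨i, hiσ, rfl⟩
        exact ⟨hiσ, pureExp_mem i⟩
    rw [himg, Finset.card_image_of_injective _ (pureExp_injective hD0)]
  have h2 : (σ ∩ purePowers n D).card ≤ dd := by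
    rw [hTcard, ← hsupV]
    exact Finset.le_sup (Finset.mem_filter.2
      ⟨Finset.mem_powerset.2 (Finset.subset_univ _), v_restrict hD hσ⟩)
  have hcardσ : σ.card = (σ ∩ G).card + (σ ∩ purePowers n D).card := by
    have hdis : Disjoint (σ ∩ G) (σ ∩ purePowers n D) := by
      rw [Finset.disjoint_left]
      intro x hxG hxP
      exact hdisj x (Finset.mem_inter.1 hxP).2 (Finset.mem_inter.1 hxG).2
    rw [← Finset.card_union_of_disjoint hdis, ← Finset.inter_union_distrib_left,
      Finset.inter_eq_left.2 hσ.1]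
  have hn : σ.card = n := by
    rcases lt_or_ge σ.card n with hlt | hge
    · obtain ⟨a, haσ, hface⟩ := scarf_extend hgen hD hD0 hσ hlt
      have heq := hmax _ hface (Finset.subset_insert a σ)
      exact absurd (heq ▸ Finset.mem_insert_self a σ) haσ
    · omega
  constructor <;> omega
end

section
/- The ideal M = ⟨x_1x_3, x_1^2x_2^2x_4^2, x_2^2x_3^2x_4^2⟩ in k[x_1,x_2,x_3,x_4] is a generic monomial ideal, its radical is ⟨x_1x_3, x_1x_2x_4, x_2x_3x_4⟩, and its Scarf complex has dimension 1. -/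
open Finset

open scoped Classical

set_option synthInstance.maxHeartbeats 1000000

open MvPolynomial
/-- The algebra map killing the variables in `s`. -/
noncomputable def phi (k : Type*) [Field k] (s : Set (Fin 4)) :
    MvPolynomial (Fin 4) k →ₐ[k] MvPolynomial (Fin 4) k :=
  aeval (fun i => if i ∈ s then 0 else X i)

lemma sub_phi_mem (k : Type*) [Field k] (s : Set (Fin 4)) (f : MvPolynomial (Fin 4) k) :
    f - phi k s f ∈ Ideal.span (X '' s : Set (MvPolynomial (Fin 4) k)) := by
  induction f using MvPolynomial.induction_on with
  | C r => simp [phi]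
  | add p q hp hq =>
      have h : p + q - phi k s (p + q) = (p - phi k s p) + (q - phi k s q) := by
        rw [map_add]; ring
      rw [h]; exact Ideal.add_mem _ hp hq
  | mul_X p i hp =>
      by_cases hi : i ∈ s
      · have h : p * X i - phi k s (p * X i) = p * X i := by
          rw [map_mul]
          simp [phi, hi]
        rw [h]
        exact Ideal.mul_mem_left _ p (Ideal.subset_span ⟨i, hi, rfl⟩)
      · have h : p * X i - phi k s (p * X i) = (p - phi k s p) * X i := by
          rw [map_mul]
          simp only [phi, aeval_X, if_neg hi]
          ring
        rw [h]
        exact Ideal.mul_mem_right _ _ hp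

lemma mem_span_X_of_phi_eq_zero (k : Type*) [Field k] {s : Set (Fin 4)}
    {f : MvPolynomial (Fin 4) k} (h : phi k s f = 0) :
    f ∈ Ideal.span (X '' s : Set (MvPolynomial (Fin 4) k)) := by
  have := sub_phi_mem k s f
  rwa [h, sub_zero] at this

lemma phi_mono_eq_zero (k : Type*) [Field k] {s : Set (Fin 4)} {a : Fin 4 → ℕ}
    (i : Fin 4) (hi : i ∈ s) (ha : a i ≠ 0) : phi k s (mono k a) = 0 := by
  rw [mono, phi, aeval_monomial, Finsupp.prod]
  rw [Finset.prod_eq_zero (i := i) (by simpa using ha)]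
  · simp
  · simp [hi, zero_pow ha]

lemma mem_monIdeal_pow2 (k : Type*) [Field k] {G : Finset (Fin 4 → ℕ)} {v w : Fin 4 → ℕ}
    (hw : w ∈ G) (hvw : ∀ i, 2 * v i = w i) : mono k v ∈ (monIdeal k G).radical := by
  refine Ideal.mem_radical_iff.mpr ⟨2, ?_⟩
  have h : (mono k v) ^ 2 = mono k w := by
    have h2 : (2:ℕ) • Finsupp.equivFunOnFinite.symm v = Finsupp.equivFunOnFinite.symm w :=
      Finsupp.ext fun i => by simpa using hvw i
    rw [mono, mono, monomial_pow, one_pow, h2]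
  rw [h]
  exact Ideal.subset_span ⟨w, hw, rfl⟩

lemma radical_eq (k : Type*) [Field k] :
    (monIdeal k ({![1,0,1,0], ![2,2,0,2], ![0,2,2,2]} : Finset (Fin 4 → ℕ))).radical
      = monIdeal k ({![1,0,1,0], ![1,1,0,1], ![0,1,1,1]} : Finset (Fin 4 → ℕ)) := by
  apply le_antisymm
  · intro f hf
    have key : ∀ s : Set (Fin 4),
        (∀ a ∈ ({![1,0,1,0], ![2,2,0,2], ![0,2,2,2]} : Finset (Fin 4 → ℕ)), ∃ i ∈ s, a i ≠ 0) →
        ∀ m ∈ f.support, ∃ i ∈ s, (m : Fin 4 →₀ ℕ) i ≠ 0 := by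
      intro s hs
      have hM : monIdeal k ({![1,0,1,0], ![2,2,0,2], ![0,2,2,2]} : Finset (Fin 4 → ℕ))
          ≤ RingHom.ker (phi k s).toRingHom := by
        rw [monIdeal, Ideal.span_le]
        rintro _ ⟨a, ha, rfl⟩
        obtain ⟨i, hi, hai⟩ := hs a (by exact_mod_cast ha)
        exact phi_mono_eq_zero k i hi hai
      have hker : phi k s f = 0 :=
        ((RingHom.ker_isPrime _).radical_le_iff.mpr hM) hf
      exact fun m hm => mem_ideal_span_X_image.mp (mem_span_X_of_phi_eq_zero k hker) m hm
    have h02 := key {0,2} (by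
      intro a ha
      simp only [Finset.mem_insert, Finset.mem_singleton] at ha
      rcases ha with rfl|rfl|rfl
      exacts [⟨0, Or.inl rfl, by decide⟩, ⟨0, Or.inl rfl, by decide⟩, ⟨2, Or.inr rfl, by decide⟩])
    have h01 := key {0,1} (by
      intro a ha
      simp only [Finset.mem_insert, Finset.mem_singleton] at ha
      rcases ha with rfl|rfl|rfl
      exacts [⟨0, Or.inl rfl, by decide⟩, ⟨0, Or.inl rfl, by decide⟩, ⟨1, Or.inr rfl, by decide⟩])
    have h03 := key {0,3} (by
      intro a ha
      simp only [Finset.mem_insert, Finset.mem_singleton] at ha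
      rcases ha with rfl|rfl|rfl
      exacts [⟨0, Or.inl rfl, by decide⟩, ⟨0, Or.inl rfl, by decide⟩, ⟨3, Or.inr rfl, by decide⟩])
    have h12 := key {1,2} (by
      intro a ha
      simp only [Finset.mem_insert, Finset.mem_singleton] at ha
      rcases ha with rfl|rfl|rfl
      exacts [⟨2, Or.inr rfl, by decide⟩, ⟨1, Or.inl rfl, by decide⟩, ⟨1, Or.inl rfl, by decide⟩])
    have h23 := key {2,3} (by
      intro a ha
      simp only [Finset.mem_insert, Finset.mem_singleton] at ha
      rcases ha with rfl|rfl|rfl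
      exacts [⟨2, Or.inl rfl, by decide⟩, ⟨3, Or.inr rfl, by decide⟩, ⟨2, Or.inl rfl, by decide⟩])
    rw [monIdeal]
    have himg : ((fun a => mono k a) '' (({![1,0,1,0], ![1,1,0,1], ![0,1,1,1]} : Finset (Fin 4 → ℕ)) : Set (Fin 4 → ℕ)))
        = ((fun s => monomial s (1:k)) ''
           (⇑Finsupp.equivFunOnFinite.symm '' (({![1,0,1,0], ![1,1,0,1], ![0,1,1,1]} : Finset (Fin 4 → ℕ)) : Set (Fin 4 → ℕ)))) := by
      rw [Set.image_image]
      rfl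
    rw [himg, mem_ideal_span_monomial_image]
    intro m hm
    have extract : ∀ (i j : Fin 4), (∃ l ∈ ({i,j} : Set (Fin 4)), (m : Fin 4 →₀ ℕ) l ≠ 0) →
        m i ≠ 0 ∨ m j ≠ 0 := by
      rintro i j ⟨l, hl, hne⟩
      rcases hl with rfl | hl
      · exact Or.inl hne
      · rw [Set.mem_singleton_iff] at hl; subst hl; exact Or.inr hne
    have n02 := extract 0 2 (h02 m hm)
    have n01 := extract 0 1 (h01 m hm)
    have n03 := extract 0 3 (h03 m hm)
    have n12 := extract 1 2 (h12 m hm)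
    have n23 := extract 2 3 (h23 m hm)
    have hwit : ∀ v : Fin 4 → ℕ, (∀ i, v i ≤ m i) →
        v ∈ ({![1,0,1,0], ![1,1,0,1], ![0,1,1,1]} : Finset (Fin 4 → ℕ)) →
        ∃ si ∈ (⇑Finsupp.equivFunOnFinite.symm ''
          (({![1,0,1,0], ![1,1,0,1], ![0,1,1,1]} : Finset (Fin 4 → ℕ)) : Set (Fin 4 → ℕ))), si ≤ m := by
      intro v hle hv
      refine ⟨Finsupp.equivFunOnFinite.symm v, ⟨v, by exact_mod_cast hv, rfl⟩, ?_⟩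
      rw [Finsupp.le_def]
      intro i
      simpa using hle i
    by_cases h0 : m 0 = 0
    · have h2 : m 2 ≠ 0 := by tauto
      have h1 : m 1 ≠ 0 := by tauto
      have h3 : m 3 ≠ 0 := by tauto
      exact hwit ![0,1,1,1] (by intro i; fin_cases i <;> simp <;> omega) (by simp)
    · by_cases h2 : m 2 = 0
      · have h1 : m 1 ≠ 0 := by tauto
        have h3 : m 3 ≠ 0 := by tauto
        exact hwit ![1,1,0,1] (by intro i; fin_cases i <;> simp <;> omega) (by simp)
      · exact hwit ![1,0,1,0] (by intro i; fin_cases i <;> simp <;> omega) (by simp)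
  · rw [monIdeal, Ideal.span_le]
    rintro _ ⟨a, ha, rfl⟩
    simp only [Finset.coe_insert, Set.mem_insert_iff, Finset.coe_singleton,
      Set.mem_singleton_iff] at ha
    rcases ha with rfl|rfl|rfl
    · exact Ideal.le_radical (Ideal.subset_span ⟨![1,0,1,0], by simp, rfl⟩)
    · exact mem_monIdeal_pow2 k (w := ![2,2,0,2]) (by simp) (by intro i; fin_cases i <;> decide)
    · exact mem_monIdeal_pow2 k (w := ![0,2,2,2]) (by simp) (by intro i; fin_cases i <;> decide)

lemma subset_triple {α : Type*} [DecidableEq α] {x y z : α} {τ : Finset α} (h : τ ⊆ {x,y,z}) :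
    τ = ∅ ∨ τ = {x} ∨ τ = {y} ∨ τ = {z} ∨ τ = {x,y} ∨ τ = {x,z} ∨ τ = {y,z} ∨ τ = {x,y,z} := by
  have key : τ = ({x,y,z} : Finset α).filter (· ∈ τ) := by
    ext e
    simp only [Finset.mem_filter]
    exact ⟨fun he => ⟨h he, he⟩, fun he => he.2⟩
  by_cases hx : x ∈ τ <;> by_cases hy : y ∈ τ <;> by_cases hz : z ∈ τ <;>
    rw [key] <;>
    simp only [Finset.filter_insert, hx, hy, hz, if_true, if_false, Finset.filter_singleton] <;>
    tauto

lemma generic_part : IsGeneric ({![1,0,1,0], ![2,2,0,2], ![0,2,2,2]} : Finset (Fin 4 → ℕ)) := by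
  constructor
  · intro a ha b hb hle
    simp only [Finset.mem_insert, Finset.mem_singleton] at ha hb
    rcases ha with rfl|rfl|rfl <;> rcases hb with rfl|rfl|rfl <;>
      first
      | rfl
      | exact absurd (hle 0) (by decide)
      | exact absurd (hle 1) (by decide)
      | exact absurd (hle 2) (by decide)
  · intro a ha b hb hne hex
    simp only [Finset.mem_insert, Finset.mem_singleton] at ha hb
    rcases ha with rfl|rfl|rfl <;> rcases hb with rfl|rfl|rfl <;>
      first
      | exact absurd rfl hne
      | exact absurd hex (by decide)
      | exact ⟨![1,0,1,0], by simp, by decide, by decide, by intro i; fin_cases i <;> decide⟩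

lemma scarf_part : scarfDim ({![1,0,1,0], ![2,2,0,2], ![0,2,2,2]} : Finset (Fin 4 → ℕ)) = 1 := by
  have hab : (![1,0,1,0] : Fin 4 → ℕ) ≠ ![2,2,0,2] := by decide
  have hac : (![1,0,1,0] : Fin 4 → ℕ) ≠ ![0,2,2,2] := by decide
  have hbc : (![2,2,0,2] : Fin 4 → ℕ) ≠ ![0,2,2,2] := by decide
  set va : Fin 4 → ℕ := ![1,0,1,0] with hva
  set vb : Fin 4 → ℕ := ![2,2,0,2] with hvb
  set vc : Fin 4 → ℕ := ![0,2,2,2] with hvc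
  set G : Finset (Fin 4 → ℕ) := {va, vb, vc} with hG
  have hsup : ((G.powerset.filter (fun σ => ScarfFace G σ)).sup Finset.card) = 2 := by
    apply le_antisymm
    · apply Finset.sup_le
      intro σ hσ
      simp only [Finset.mem_filter, Finset.mem_powerset] at hσ
      obtain ⟨hσG, hsub, hscarf⟩ := hσ
      by_contra hcard
      push_neg at hcard
      have hcardG : G.card = 3 := by
        rw [hG, Finset.card_insert_of_notMem (by simp [hab, hac]), Finset.card_pair hbc]
      have hσeq : σ = G := Finset.eq_of_subset_of_card_le hσG (by omega)
      refine hscarf {vb, vc}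
        (by intro e he; simp only [hG, Finset.mem_insert, Finset.mem_singleton] at he ⊢; tauto)
        ?_ ?_
      · rw [hσeq, hG]
        intro hcon
        have : va ∈ ({vb, vc} : Finset (Fin 4 → ℕ)) := by rw [hcon]; simp
        simp only [Finset.mem_insert, Finset.mem_singleton] at this
        tauto
      · rw [hσeq, hG]
        funext i
        simp only [lcmExp, Finset.sup_insert, Finset.sup_singleton]
        fin_cases i <;> simp [hva, hvb, hvc]
    · have hmem : ({va, vb} : Finset (Fin 4 → ℕ)) ∈ G.powerset.filter (fun σ => ScarfFace G σ) := by
        rw [Finset.mem_filter, Finset.mem_powerset]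
        refine ⟨?_, ?_, ?_⟩
        · intro e he; simp only [hG, Finset.mem_insert, Finset.mem_singleton] at he ⊢; tauto
        · intro e he; simp only [hG, Finset.mem_insert, Finset.mem_singleton] at he ⊢; tauto
        · intro τ hτ hne
          rw [hG] at hτ
          rcases subset_triple hτ with rfl|rfl|rfl|rfl|rfl|rfl|rfl|rfl
          · intro h; have := congrFun h 0; simp [lcmExp, hva, hvb] at this
          · intro h; have := congrFun h 1; simp [lcmExp, hva, hvb] at this
          · intro h; have := congrFun h 2; simp [lcmExp, hva, hvb] at this
          · intro h; have := congrFun h 0; simp [lcmExp, hva, hvb, hvc] at this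
          · exact absurd rfl hne
          · intro h; have := congrFun h 0; simp [lcmExp, hva, hvb, hvc] at this
          · intro h; have := congrFun h 2; simp [lcmExp, hva, hvb, hvc] at this
          · intro h; have := congrFun h 2; simp [lcmExp, hva, hvb, hvc] at this
      calc (2:ℕ) = ({va, vb} : Finset (Fin 4 → ℕ)).card := (Finset.card_pair hab).symm
      _ ≤ _ := Finset.le_sup hmem
  rw [scarfDim, hsup]
  norm_num

/-- The ideal `M = ⟨x₁x₃, x₁²x₂²x₄², x₂²x₃²x₄²⟩` in
`k[x₁,x₂,x₃,x₄]` is generic, its radical is `⟨x₁x₃, x₁x₂x₄, x₂x₃x₄⟩`, and its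
Scarf complex has dimension 1. -/
theorem example_matroid_deformation (k : Type*) [Field k] :
    IsGeneric ({![1,0,1,0], ![2,2,0,2], ![0,2,2,2]} : Finset (Fin 4 → ℕ)) ∧
    (monIdeal k ({![1,0,1,0], ![2,2,0,2], ![0,2,2,2]} : Finset (Fin 4 → ℕ))).radical
      = monIdeal k ({![1,0,1,0], ![1,1,0,1], ![0,1,1,1]} : Finset (Fin 4 → ℕ)) ∧
    scarfDim ({![1,0,1,0], ![2,2,0,2], ![0,2,2,2]} : Finset (Fin 4 → ℕ)) = 1 := by
  exact ⟨generic_part, radical_eq k, scarf_part⟩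
end
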